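/- Let m ≥ 2 and k ≥ 2, and consider a deck of m^k cards with its out m-shuffle O_m and in m^2-shuffle I_{m^2}. For 1 ≤ j ≤ k define C_j = O_m^{j−1} I_{m^2} O_m^{−(j+1)}, composed left to right. Then for 1 ≤ j ≤ k−1 the permutation C_j flips exactly the j-th and (j+1)-st base-m digits, sending the card with base-m index (x_1, …, x_k) to (x_1, …, x_{j−1}, x̄_j, x̄_{j+1}, x_{j+2}, …, x_k), and C_k flips exactly the first and last digits, sending (x_1, …, x_k) to (x̄_1, x_2, …, x_{k−1}, x̄_k), where x̄ = (m−1) − x. -/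

import Mathlib

namespace Stmt13

def val (m : ℕ) : List ℕ → ℕ
  | [] => 0
  | a :: L => a * m ^ L.length + val m L

lemma val_cons (m a : ℕ) (L : List ℕ) :
    val m (a :: L) = a * m ^ L.length + val m L := rfl

lemma val_append (m : ℕ) (L M : List ℕ) :
    val m (L ++ M) = val m L * m ^ M.length + val m M := by
  induction L with
  | nil => simp [val]
  | cons a L ih =>
      simp only [List.cons_append, val_cons, List.length_append, ih, pow_add]
      ring

lemma val_lt (m : ℕ) (hm : 1 ≤ m) : ∀ (L : List ℕ), (∀ a ∈ L, a < m) →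
    val m L < m ^ L.length := by
  intro L
  induction L with
  | nil =>
      intro _
      simp only [val, List.length_nil, pow_zero]
      omega
  | cons a L ih =>
      intro h
      have h1 : val m L < m ^ L.length := ih (fun b hb => h b (List.mem_cons_of_mem _ hb))
      have h2 : a + 1 ≤ m := h a List.mem_cons_self
      simp only [val_cons, List.length_cons]
      calc a * m ^ L.length + val m L < (a + 1) * m ^ L.length := by
            rw [add_mul, one_mul]; omega
        _ ≤ m * m ^ L.length := Nat.mul_le_mul_right _ h2
        _ = m ^ (L.length + 1) := by rw [pow_succ]; ring

lemma sum_ofFn (m : ℕ) : ∀ (n : ℕ) (x : Fin n → ℕ),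
    ∑ t : Fin n, x t * m ^ (n - 1 - (t : ℕ)) = val m (List.ofFn x) := by
  intro n
  induction n with
  | zero => intro x; simp [val]
  | succ n ih =>
      intro x
      rw [Fin.sum_univ_succ, List.ofFn_succ, val_cons]
      simp only [List.length_ofFn]
      congr 1
      rw [← ih (fun t => x t.succ)]
      apply Finset.sum_congr rfl
      intro t _
      congr 2
      simp only [Fin.val_succ]
      omega


section

variable (m k : ℕ) (O I2 : Equiv.Perm (Fin (m ^ k)))

lemma O_val (hm : 2 ≤ m) (hk : 2 ≤ k)
    (hO : ∀ i : Fin (m ^ k),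
      (O i : ℕ) = m * ((i : ℕ) % m ^ (k - 1)) + (i : ℕ) / m ^ (k - 1))
    (L : List ℕ) (hL : L.length = k) (hb : ∀ a ∈ L, a < m)
    (i : Fin (m ^ k)) (hi : (i : ℕ) = val m L) :
    (O i : ℕ) = val m (L.rotate 1) := by
  obtain ⟨a, L', rfl⟩ : ∃ a L', L = a :: L' := by
    cases L with
    | nil => simp at hL; omega
    | cons a L' => exact ⟨a, L', rfl⟩
  have hlen : L'.length = k - 1 := by simp at hL; omega
  have hv : val m L' < m ^ (k - 1) := by
    rw [← hlen]
    exact val_lt m (by omega) L' (fun b hb' => hb b (List.mem_cons_of_mem _ hb'))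
  have hval : (i : ℕ) = m ^ (k - 1) * a + val m L' := by
    rw [hi, val_cons, hlen]; ring
  have hmod : (i : ℕ) % m ^ (k - 1) = val m L' := by
    rw [hval, Nat.mul_add_mod, Nat.mod_eq_of_lt hv]
  have hdiv : (i : ℕ) / m ^ (k - 1) = a := by
    rw [hval, Nat.mul_add_div (by positivity), Nat.div_eq_of_lt hv, add_zero]
  rw [hO i, hmod, hdiv]
  have hr : (a :: L').rotate 1 = L' ++ [a] := by
    rw [show (1 : ℕ) = 0 + 1 from rfl, List.rotate_cons_succ, List.rotate_zero]
  rw [hr, val_append]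
  simp [val]
  ring

lemma O_pow_val (hm : 2 ≤ m) (hk : 2 ≤ k)
    (hO : ∀ i : Fin (m ^ k),
      (O i : ℕ) = m * ((i : ℕ) % m ^ (k - 1)) + (i : ℕ) / m ^ (k - 1)) :
    ∀ (n : ℕ) (L : List ℕ), L.length = k → (∀ a ∈ L, a < m) →
      ∀ i : Fin (m ^ k), (i : ℕ) = val m L → ((O ^ n) i : ℕ) = val m (L.rotate n) := by
  intro n
  induction n with
  | zero => intro L _ _ i hi; simpa using hi
  | succ n ih =>
      intro L hL hb i hi
      have hOi : (O i : ℕ) = val m (L.rotate 1) := O_val m k O hm hk hO L hL hb i hi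
      have h2 := ih (L.rotate 1) (by simpa using hL)
        (fun a ha => hb a (List.mem_rotate.1 ha)) (O i) hOi
      rw [List.rotate_rotate] at h2
      rw [pow_succ, Equiv.Perm.mul_apply]
      rw [h2]
      congr 2
      omega

lemma Oinv_pow_val (hm : 2 ≤ m) (hk : 2 ≤ k)
    (hO : ∀ i : Fin (m ^ k),
      (O i : ℕ) = m * ((i : ℕ) % m ^ (k - 1)) + (i : ℕ) / m ^ (k - 1))
    (n : ℕ) (L : List ℕ) (hL : L.length = k) (hb : ∀ a ∈ L, a < m)
    (i : Fin (m ^ k)) (hi : (i : ℕ) = val m L) :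
    ((O⁻¹ ^ n) i : ℕ) = val m (L.rotate (n * (k - 1))) := by
  have hL' : (L.rotate (n * (k - 1))).length = k := by simpa using hL
  have hb' : ∀ a ∈ L.rotate (n * (k - 1)), a < m := fun a ha => hb a (List.mem_rotate.1 ha)
  have hvlt : val m (L.rotate (n * (k - 1))) < m ^ k := by
    have h := val_lt m (by omega) _ hb'
    rw [hL'] at h
    exact h
  set jf : Fin (m ^ k) := ⟨val m (L.rotate (n * (k - 1))), hvlt⟩ with hjf
  have h1 : ((O ^ n) jf : ℕ) = val m ((L.rotate (n * (k - 1))).rotate n) :=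
    O_pow_val m k O hm hk hO n (L.rotate (n * (k - 1))) hL' hb' jf rfl
  have h2 : (L.rotate (n * (k - 1))).rotate n = L := by
    rw [List.rotate_rotate]
    have e : n * (k - 1) + n = L.length * n := by
      rw [hL, Nat.mul_comm n (k - 1), ← Nat.succ_mul]
      congr 1
      omega
    rw [e, List.rotate_length_mul]
  have h3 : (O ^ n) jf = i := by
    apply Fin.ext
    rw [h1, h2, ← hi]
  have h4 : (O⁻¹ ^ n) i = jf := by
    rw [inv_pow, ← h3, ← Equiv.Perm.mul_apply, inv_mul_cancel, Equiv.Perm.one_apply]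
  rw [h4]

lemma I2_val (hm : 2 ≤ m) (hk : 2 ≤ k)
    (hI2 : ∀ i : Fin (m ^ k),
      (I2 i : ℕ) = m ^ 2 * ((i : ℕ) % m ^ (k - 2)) + (m ^ 2 - 1 - (i : ℕ) / m ^ (k - 2)))
    (a b : ℕ) (L'' : List ℕ)
    (hL : (a :: b :: L'').length = k) (hb : ∀ c ∈ a :: b :: L'', c < m)
    (i : Fin (m ^ k)) (hi : (i : ℕ) = val m (a :: b :: L'')) :
    (I2 i : ℕ) = val m (L'' ++ [m - 1 - a, m - 1 - b]) := by
  have hlen : L''.length = k - 2 := by simp at hL; omega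
  have ha : a < m := hb a (by simp)
  have hbb : b < m := hb b (by simp)
  have hv : val m L'' < m ^ (k - 2) := by
    rw [← hlen]
    exact val_lt m (by omega) _ (fun c hc => hb c (by simp [hc]))
  have hval : (i : ℕ) = m ^ (k - 2) * (a * m + b) + val m L'' := by
    rw [hi, val_cons, val_cons, hlen]
    have e2 : (b :: L'').length = k - 2 + 1 := by simp [hlen]
    rw [e2, pow_succ]
    ring
  have hmod : (i : ℕ) % m ^ (k - 2) = val m L'' := by
    rw [hval, Nat.mul_add_mod, Nat.mod_eq_of_lt hv]
  have hdiv : (i : ℕ) / m ^ (k - 2) = a * m + b := by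
    rw [hval, Nat.mul_add_div (by positivity), Nat.div_eq_of_lt hv, add_zero]
  have key : m ^ 2 - 1 - (a * m + b) = (m - 1 - a) * m + (m - 1 - b) := by
    have e3 : m ^ 2 = m * m := sq m
    have e4 : (m - 1 - a) * m + (a + 1) * m = m * m := by
      rw [← add_mul]
      have e : m - 1 - a + (a + 1) = m := by omega
      rw [e]
    have e5 : (a + 1) * m = a * m + m := by ring
    omega
  rw [hI2 i, hmod, hdiv, key, val_append]
  simp [val]
  ring

end


lemma rot_final (k j : ℕ) (hk : 1 ≤ k) (L' R' : List ℕ) (hlen : L'.length = k)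
    (hkey : L'.rotate (j + 1) = R') :
    R'.rotate ((j + 1) * (k - 1)) = L' := by
  rw [← hkey, List.rotate_rotate]
  have e : j + 1 + (j + 1) * (k - 1) = L'.length * (j + 1) := by
    rw [hlen]
    have h2 : k - 1 + 1 = k := by omega
    calc j + 1 + (j + 1) * (k - 1) = (j + 1) * (k - 1 + 1) := by ring
      _ = (j + 1) * k := by rw [h2]
      _ = k * (j + 1) := by ring
  rw [e, List.rotate_length_mul]

section

variable (m k : ℕ) (O I2 : Equiv.Perm (Fin (m ^ k)))

lemma case1 (hm : 2 ≤ m) (hk : 2 ≤ k)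
    (hO : ∀ i : Fin (m ^ k),
      (O i : ℕ) = m * ((i : ℕ) % m ^ (k - 1)) + (i : ℕ) / m ^ (k - 1))
    (hI2 : ∀ i : Fin (m ^ k),
      (I2 i : ℕ) = m ^ 2 * ((i : ℕ) % m ^ (k - 2)) + (m ^ 2 - 1 - (i : ℕ) / m ^ (k - 2)))
    (j : ℕ) (hj1 : 1 ≤ j) (hjk : j ≤ k - 1)
    (x : Fin k → ℕ) (hx : ∀ t, x t < m) (i : Fin (m ^ k))
    (hi : (i : ℕ) = ∑ t : Fin k, x t * m ^ (k - 1 - (t : ℕ))) :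
    (((O⁻¹ ^ (j + 1) * I2 * O ^ (j - 1)) i : ℕ)) =
      ∑ t : Fin k, (if (t : ℕ) = j - 1 ∨ (t : ℕ) = j then m - 1 - x t else x t)
        * m ^ (k - 1 - (t : ℕ)) := by
  have hjk' : j < k := by omega
  set L := List.ofFn x with hLdef
  have hL : L.length = k := by simp [hLdef]
  have hbL : ∀ a ∈ L, a < m := by
    intro a ha
    rw [hLdef, List.mem_ofFn] at ha
    obtain ⟨t, ht⟩ := ha
    rw [← ht]; exact hx t
  have hiL : (i : ℕ) = val m L := by rw [hi, sum_ofFn]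
  have hlt1 : j - 1 < L.length := by rw [hL]; omega
  have hlt2 : j < L.length := by rw [hL]; omega
  have ej : j - 1 + 1 = j := by omega
  have hd1 : L.drop (j - 1) = L[j-1]'hlt1 :: L[j]'hlt2 :: L.drop (j + 1) := by
    rw [List.drop_eq_getElem_cons hlt1, ej, List.drop_eq_getElem_cons hlt2]
  have hrot : L.rotate (j - 1) =
      L[j-1]'hlt1 :: L[j]'hlt2 :: (L.drop (j + 1) ++ L.take (j - 1)) := by
    rw [List.rotate_eq_drop_append_take (by rw [hL]; omega), hd1]
    rfl
  have h1 : ((O ^ (j - 1)) i : ℕ) = val m (L.rotate (j - 1)) :=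
    O_pow_val m k O hm hk hO (j - 1) L hL hbL i hiL
  have hMlen : (L[j-1]'hlt1 :: L[j]'hlt2 :: (L.drop (j + 1) ++ L.take (j - 1))).length = k := by
    simp [hL]
    omega
  have hbM : ∀ c ∈ L[j-1]'hlt1 :: L[j]'hlt2 :: (L.drop (j + 1) ++ L.take (j - 1)), c < m := by
    intro c hc
    rcases List.mem_cons.1 hc with h | hc
    · subst h; exact hbL _ (List.getElem_mem _)
    rcases List.mem_cons.1 hc with h | hc
    · subst h; exact hbL _ (List.getElem_mem _)
    rcases List.mem_append.1 hc with h | h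
    · exact hbL _ (List.mem_of_mem_drop h)
    · exact hbL _ (List.mem_of_mem_take h)
  have h2 : (I2 ((O ^ (j - 1)) i) : ℕ) =
      val m ((L.drop (j + 1) ++ L.take (j - 1)) ++
        [m - 1 - L[j-1]'hlt1, m - 1 - L[j]'hlt2]) :=
    I2_val m k I2 hm hk hI2 _ _ _ hMlen hbM _ (by rw [h1, hrot])
  have hR'len : ((L.drop (j + 1) ++ L.take (j - 1)) ++
      [m - 1 - L[j-1]'hlt1, m - 1 - L[j]'hlt2]).length = k := by
    simp [hL]
    omega
  have hbR' : ∀ c ∈ (L.drop (j + 1) ++ L.take (j - 1)) ++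
      [m - 1 - L[j-1]'hlt1, m - 1 - L[j]'hlt2], c < m := by
    intro c hc
    rcases List.mem_append.1 hc with h | h
    · rcases List.mem_append.1 h with h | h
      · exact hbL _ (List.mem_of_mem_drop h)
      · exact hbL _ (List.mem_of_mem_take h)
    · simp only [List.mem_cons, List.mem_singleton] at h
      rcases h with h | h | h
      · omega
      · omega
      · simp at h
  have h3 : ((O⁻¹ ^ (j + 1)) (I2 ((O ^ (j - 1)) i)) : ℕ) =
      val m (((L.drop (j + 1) ++ L.take (j - 1)) ++
        [m - 1 - L[j-1]'hlt1, m - 1 - L[j]'hlt2]).rotate ((j + 1) * (k - 1))) :=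
    Oinv_pow_val m k O hm hk hO (j + 1) _ hR'len hbR' _ h2
  set x' : Fin k → ℕ := fun t =>
    if (t : ℕ) = j - 1 ∨ (t : ℕ) = j then m - 1 - x t else x t with hx'def
  set L' := List.ofFn x' with hL'def
  have hL'len : L'.length = k := by simp [hL'def]
  have hAlen : (L.take (j - 1)).length = j - 1 := by simp [hL]; omega
  have hgetL : ∀ (t : ℕ) (h : t < L.length), L[t] = x ⟨t, hL ▸ h⟩ :=
    fun t h => List.getElem_ofFn (f := x) (i := t) h
  have hgetL' : ∀ (t : ℕ) (h : t < L'.length), L'[t] = x' ⟨t, hL'len ▸ h⟩ :=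
    fun t h => List.getElem_ofFn (f := x') (i := t) h
  have hgetL2 : ∀ (t : ℕ) (h : t < k), L[t]'(by rw [hL]; exact h) = x ⟨t, h⟩ := by
    intro t h
    rw [hgetL]
  have hgetL'2 : ∀ (t : ℕ) (h : t < k),
      L'[t]'(by rw [hL'len]; exact h) =
        if t = j - 1 ∨ t = j then m - 1 - x ⟨t, h⟩ else x ⟨t, h⟩ := by
    intro t h
    rw [hgetL']
  have hdecomp : L' = List.take (j - 1) L ++
      (m - 1 - L[j-1]'hlt1) :: (m - 1 - L[j]'hlt2) :: List.drop (j + 1) L := by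
    apply List.ext_getElem
    · simp [hL'len, hL]
      omega
    · intro t h1t h2t
      have h1t' : t < k := by rw [hL'len] at h1t; exact h1t
      rw [hgetL'2 t h1t']
      by_cases hc1 : t < j - 1
      · rw [List.getElem_append_left (by rw [hAlen]; exact hc1), List.getElem_take]
        simp only [hgetL]
        rw [if_neg (show ¬(t = j - 1 ∨ t = j) from by omega)]
      · by_cases hc2 : t = j - 1
        · rw [List.getElem_append_right (by rw [hAlen]; omega)]
          simp only [show t - (List.take (j - 1) L).length = 0 from by rw [hAlen]; omega]
          rw [List.getElem_cons_zero]
          rw [if_pos (Or.inl hc2)]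
          rw [show (⟨t, h1t'⟩ : Fin k) = ⟨j - 1, by omega⟩ from Fin.ext hc2]
          simp only [hgetL]
        · by_cases hc3 : t = j
          · rw [List.getElem_append_right (by rw [hAlen]; omega)]
            simp only [show t - (List.take (j - 1) L).length = 0 + 1 from by rw [hAlen]; omega]
            rw [List.getElem_cons_succ, List.getElem_cons_zero]
            rw [if_pos (Or.inr hc3)]
            rw [show (⟨t, h1t'⟩ : Fin k) = ⟨j, by omega⟩ from Fin.ext hc3]
            simp only [hgetL]
          · have hgt : j < t := by omega
            rw [List.getElem_append_right (by rw [hAlen]; omega)]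
            simp only [show t - (List.take (j - 1) L).length = (t - j - 1) + 1 + 1 from by
              rw [hAlen]; omega]
            rw [List.getElem_cons_succ, List.getElem_cons_succ, List.getElem_drop]
            rw [if_neg (show ¬(t = j - 1 ∨ t = j) from by omega)]
            rw [show (⟨t, h1t'⟩ : Fin k) = ⟨j + 1 + (t - j - 1), by omega⟩ from
                  Fin.ext (show t = j + 1 + (t - j - 1) by omega)]
            simp only [hgetL]
  have hkey : L'.rotate (j + 1) = (L.drop (j + 1) ++ L.take (j - 1)) ++
      [m - 1 - L[j-1]'hlt1, m - 1 - L[j]'hlt2] := by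
    rw [List.rotate_eq_drop_append_take (by rw [hL'len]; omega), hdecomp]
    rw [List.drop_append, List.take_append]
    rw [List.drop_eq_nil_of_le
      (show (List.take (j - 1) L).length ≤ j + 1 from by rw [hAlen]; omega)]
    rw [List.take_of_length_le
      (show (List.take (j - 1) L).length ≤ j + 1 from by rw [hAlen]; omega)]
    rw [show j + 1 - (List.take (j - 1) L).length = 2 from by rw [hAlen]; omega]
    simp [List.append_assoc]
  rw [Equiv.Perm.mul_apply, Equiv.Perm.mul_apply, h3]
  have hfinal := rot_final k j (by omega) L' _ hL'len hkey
  rw [hfinal, hL'def]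
  exact (sum_ofFn m k x').symm

lemma case2 (hm : 2 ≤ m) (hk : 2 ≤ k)
    (hO : ∀ i : Fin (m ^ k),
      (O i : ℕ) = m * ((i : ℕ) % m ^ (k - 1)) + (i : ℕ) / m ^ (k - 1))
    (hI2 : ∀ i : Fin (m ^ k),
      (I2 i : ℕ) = m ^ 2 * ((i : ℕ) % m ^ (k - 2)) + (m ^ 2 - 1 - (i : ℕ) / m ^ (k - 2)))
    (x : Fin k → ℕ) (hx : ∀ t, x t < m) (i : Fin (m ^ k))
    (hi : (i : ℕ) = ∑ t : Fin k, x t * m ^ (k - 1 - (t : ℕ))) :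
    (((O⁻¹ ^ (k + 1) * I2 * O ^ (k - 1)) i : ℕ)) =
      ∑ t : Fin k, (if (t : ℕ) = 0 ∨ (t : ℕ) = k - 1 then m - 1 - x t else x t)
        * m ^ (k - 1 - (t : ℕ)) := by
  set L := List.ofFn x with hLdef
  have hL : L.length = k := by simp [hLdef]
  have hbL : ∀ a ∈ L, a < m := by
    intro a ha
    rw [hLdef, List.mem_ofFn] at ha
    obtain ⟨t, ht⟩ := ha
    rw [← ht]; exact hx t
  have hiL : (i : ℕ) = val m L := by rw [hi, sum_ofFn]
  have hlt0 : 0 < L.length := by rw [hL]; omega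
  have hltk : k - 1 < L.length := by rw [hL]; omega
  have hgetL : ∀ (t : ℕ) (h : t < L.length), L[t] = x ⟨t, hL ▸ h⟩ :=
    fun t h => List.getElem_ofFn (f := x) (i := t) h
  have hd1 : L.drop (k - 1) = [L[k-1]'hltk] := by
    rw [List.drop_eq_getElem_cons hltk]
    simp only [show k - 1 + 1 = k from by omega]
    rw [List.drop_eq_nil_of_le (le_of_eq hL)]
  have hL0 : L = L[0]'hlt0 :: L.drop 1 := by
    have h := List.drop_eq_getElem_cons (l := L) (i := 0) hlt0
    simpa using h
  have htake : L.take (k - 1) = L[0]'hlt0 :: (L.drop 1).take (k - 2) := by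
    calc L.take (k - 1) = (L[0]'hlt0 :: L.drop 1).take ((k - 2) + 1) := by
          rw [← hL0, show (k - 2) + 1 = k - 1 from by omega]
      _ = L[0]'hlt0 :: (L.drop 1).take (k - 2) := List.take_succ_cons
  have hrot : L.rotate (k - 1) = L[k-1]'hltk :: L[0]'hlt0 :: (L.drop 1).take (k - 2) := by
    rw [List.rotate_eq_drop_append_take (by rw [hL]; omega), hd1, htake]
    rfl
  have h1 : ((O ^ (k - 1)) i : ℕ) = val m (L.rotate (k - 1)) :=
    O_pow_val m k O hm hk hO (k - 1) L hL hbL i hiL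
  have hRlen : ((L.drop 1).take (k - 2)).length = k - 2 := by
    simp [hL]
    omega
  have hMlen : (L[k-1]'hltk :: L[0]'hlt0 :: (L.drop 1).take (k - 2)).length = k := by
    simp [hL]
    omega
  have hbM : ∀ c ∈ L[k-1]'hltk :: L[0]'hlt0 :: (L.drop 1).take (k - 2), c < m := by
    intro c hc
    rcases List.mem_cons.1 hc with h | hc
    · subst h; exact hbL _ (List.getElem_mem _)
    rcases List.mem_cons.1 hc with h | hc
    · subst h; exact hbL _ (List.getElem_mem _)
    exact hbL _ (List.mem_of_mem_drop (List.mem_of_mem_take hc))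
  have h2 : (I2 ((O ^ (k - 1)) i) : ℕ) =
      val m ((L.drop 1).take (k - 2) ++ [m - 1 - L[k-1]'hltk, m - 1 - L[0]'hlt0]) :=
    I2_val m k I2 hm hk hI2 _ _ _ hMlen hbM _ (by rw [h1, hrot])
  have hR'len : ((L.drop 1).take (k - 2) ++
      [m - 1 - L[k-1]'hltk, m - 1 - L[0]'hlt0]).length = k := by
    simp [hL]
    omega
  have hbR' : ∀ c ∈ (L.drop 1).take (k - 2) ++
      [m - 1 - L[k-1]'hltk, m - 1 - L[0]'hlt0], c < m := by
    intro c hc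
    rcases List.mem_append.1 hc with h | h
    · exact hbL _ (List.mem_of_mem_drop (List.mem_of_mem_take h))
    · simp only [List.mem_cons, List.mem_singleton] at h
      rcases h with h | h | h
      · omega
      · omega
      · simp at h
  have h3 : ((O⁻¹ ^ (k + 1)) (I2 ((O ^ (k - 1)) i)) : ℕ) =
      val m (((L.drop 1).take (k - 2) ++
        [m - 1 - L[k-1]'hltk, m - 1 - L[0]'hlt0]).rotate ((k + 1) * (k - 1))) :=
    Oinv_pow_val m k O hm hk hO (k + 1) _ hR'len hbR' _ h2
  set x' : Fin k → ℕ := fun t =>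
    if (t : ℕ) = 0 ∨ (t : ℕ) = k - 1 then m - 1 - x t else x t with hx'def
  set L' := List.ofFn x' with hL'def
  have hL'len : L'.length = k := by simp [hL'def]
  have hgetL' : ∀ (t : ℕ) (h : t < L'.length), L'[t] = x' ⟨t, hL'len ▸ h⟩ :=
    fun t h => List.getElem_ofFn (f := x') (i := t) h
  have hgetL'2 : ∀ (t : ℕ) (h : t < k),
      L'[t]'(by rw [hL'len]; exact h) =
        if t = 0 ∨ t = k - 1 then m - 1 - x ⟨t, h⟩ else x ⟨t, h⟩ := by
    intro t h
    rw [hgetL']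
  have hdecomp : L' = (m - 1 - L[0]'hlt0) ::
      ((L.drop 1).take (k - 2) ++ [m - 1 - L[k-1]'hltk]) := by
    apply List.ext_getElem
    · simp [hL'len, hL]
      omega
    · intro t h1t h2t
      have h1t' : t < k := by rw [hL'len] at h1t; exact h1t
      rw [hgetL'2 t h1t']
      by_cases hc1 : t = 0
      · simp only [hc1]
        rw [if_pos (show True ∨ (0 : ℕ) = k - 1 from Or.inl trivial),
            List.getElem_cons_zero]
        simp only [hgetL]
      · obtain ⟨s, rfl⟩ : ∃ s, t = s + 1 := ⟨t - 1, by omega⟩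
        rw [List.getElem_cons_succ]
        by_cases hc2 : s + 1 = k - 1
        · rw [List.getElem_append_right (by rw [hRlen]; omega)]
          simp only [show s - ((L.drop 1).take (k - 2)).length = 0 from by rw [hRlen]; omega]
          rw [List.getElem_cons_zero, if_pos (Or.inr hc2)]
          rw [show (⟨s + 1, h1t'⟩ : Fin k) = ⟨k - 1, by omega⟩ from
            Fin.ext (show s + 1 = k - 1 from hc2)]
          simp only [hgetL]
        · rw [List.getElem_append_left (by rw [hRlen]; omega), List.getElem_take,
              List.getElem_drop]
          rw [if_neg (by omega)]
          rw [show (⟨s + 1, h1t'⟩ : Fin k) = ⟨1 + s, by omega⟩ from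
            Fin.ext (show s + 1 = 1 + s by omega)]
          simp only [hgetL]
  have hkey : L'.rotate (k + 1) = (L.drop 1).take (k - 2) ++
      [m - 1 - L[k-1]'hltk, m - 1 - L[0]'hlt0] := by
    have hmod : (k + 1) % k = 1 := by
      rw [Nat.add_mod_left, Nat.mod_eq_of_lt (by omega)]
    have hrm : L'.rotate (k + 1) = L'.rotate 1 := by
      conv_rhs => rw [← hmod]
      rw [← hL'len, List.rotate_mod]
    have hone : ∀ (a : ℕ) (l : List ℕ), (a :: l).rotate 1 = l ++ [a] := fun a l => by
      simpa using List.rotate_cons_succ l a 0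
    rw [hrm, hdecomp, hone]
    simp [List.append_assoc]
  rw [Equiv.Perm.mul_apply, Equiv.Perm.mul_apply, h3]
  have hfinal := rot_final k k (by omega) L' _ hL'len hkey
  rw [hfinal, hL'def]
  exact (sum_ofFn m k x').symm

end

end Stmt13


/-- For `m ≥ 2`, `k ≥ 2`, with `O` the out `m`-shuffle and `I2` the in
`m^2`-shuffle on a deck of `m^k` cards, define
`C j = O^(j−1) I2 O^(−(j+1))` (composed left to right; in Mathlib's right-to-left convention
`(O⁻¹)^(j+1) * I2 * O^(j−1)`) for `1 ≤ j ≤ k`.  For `1 ≤ j ≤ k−1`, `C j` flips exactly the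
`j`-th and `(j+1)`-st base-`m` digits, and `C k` flips exactly the first and last digits,
where the flip of a digit `x` is `(m−1) − x`. -/
theorem C_j_flips_two_digits (m k : ℕ) (hm : 2 ≤ m) (hk : 2 ≤ k)
    (O I2 : Equiv.Perm (Fin (m ^ k)))
    (hO : ∀ i : Fin (m ^ k),
      (O i : ℕ) = m * ((i : ℕ) % m ^ (k - 1)) + (i : ℕ) / m ^ (k - 1))
    (hI2 : ∀ i : Fin (m ^ k),
      (I2 i : ℕ) = m ^ 2 * ((i : ℕ) % m ^ (k - 2)) + (m ^ 2 - 1 - (i : ℕ) / m ^ (k - 2)))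
    (C : ℕ → Equiv.Perm (Fin (m ^ k)))
    (hC : ∀ j, C j = (O⁻¹) ^ (j + 1) * I2 * O ^ (j - 1)) :
    (∀ j, 1 ≤ j → j ≤ k - 1 →
      ∀ x : Fin k → ℕ, (∀ t, x t < m) →
        ∀ i : Fin (m ^ k), (i : ℕ) = ∑ t : Fin k, x t * m ^ (k - 1 - (t : ℕ)) →
          (C j i : ℕ) = ∑ t : Fin k,
            (if (t : ℕ) = j - 1 ∨ (t : ℕ) = j then m - 1 - x t else x t)
              * m ^ (k - 1 - (t : ℕ))) ∧
    (∀ x : Fin k → ℕ, (∀ t, x t < m) →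
      ∀ i : Fin (m ^ k), (i : ℕ) = ∑ t : Fin k, x t * m ^ (k - 1 - (t : ℕ)) →
        (C k i : ℕ) = ∑ t : Fin k,
          (if (t : ℕ) = 0 ∨ (t : ℕ) = k - 1 then m - 1 - x t else x t)
            * m ^ (k - 1 - (t : ℕ))) := by
  constructor
  · intro j hj1 hjk x hx i hi
    rw [hC j]
    exact Stmt13.case1 m k O I2 hm hk hO hI2 j hj1 hjk x hx i hi
  · intro x hx i hi
    rw [hC k]
    exact Stmt13.case2 m k O I2 hm hk hO hI2 x hx i hi
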